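/- Let 0 < α < π, d ≥ 2, and set α' = α/(2^{100} d). Let C(α') be the solid cone about e₁ with apex half-angle α'/2, and let V ⊆ ℝ^d be a finite pattern with no three collinear points whose minimal angle (over all triples of distinct points, measured at the middle vertex) is α and whose minimal side length is 1. Then for every x ∈ C(α') and every r > 2M(x, α') (where M(x,α') is as in the cone-angle lemma), there is no isometry O ∈ O(d) with x + r·O(V) ⊆ C(α'), provided x is one of the vertices of the copy x + r·O(V). -/

import Mathlib

/-- The first standard basis vector of `ℝ^d`. -/
noncomputable def e1 (d : ℕ) : EuclideanSpace ℝ (Fin d) :=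
  WithLp.toLp 2 (fun j : Fin d => (if (j : ℕ) = 0 then 1 else 0 : ℝ))

/-- The solid cone about the `e₁` axis with apex angle `α'`. -/
def cone (d : ℕ) (α' : ℝ) : Set (EuclideanSpace ℝ (Fin d)) :=
  {y | y ≠ 0 ∧ InnerProductGeometry.angle y (e1 d) ≤ α' / 2}

/-- The thin cone `C(α')`, `α' = α/(2^{100}d)`, contains no pinned affine copy
`x + r·O(V)` of a pattern `V` with minimal angle `α` and minimal side length `1`
at any scale `r > 2M(x, α')`, where `M` is as in the cone-angle lemma and `x` is
one of the vertices of the copy. -/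
theorem cone_avoids_pattern (d : ℕ) (hd : 2 ≤ d) (α : ℝ) (hα0 : 0 < α)
    (hαπ : α < Real.pi) (α' : ℝ) (hα' : α' = α / (2 ^ 100 * d))
    (V : Set (EuclideanSpace ℝ (Fin d))) (hVfin : V.Finite)
    (hVnocol : ∀ p ∈ V, ∀ q ∈ V, ∀ s ∈ V, p ≠ q → p ≠ s → q ≠ s →
      ¬ Collinear ℝ ({p, q, s} : Set (EuclideanSpace ℝ (Fin d))))
    (hangle : ∀ p ∈ V, ∀ q ∈ V, ∀ s ∈ V, p ≠ q → p ≠ s → q ≠ s →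
      α ≤ InnerProductGeometry.angle (q - p) (s - p))
    (hangle_eq : ∃ p ∈ V, ∃ q ∈ V, ∃ s ∈ V, p ≠ q ∧ p ≠ s ∧ q ≠ s ∧
      InnerProductGeometry.angle (q - p) (s - p) = α)
    (hside : ∀ p ∈ V, ∀ q ∈ V, p ≠ q → 1 ≤ ‖p - q‖)
    (hside_eq : ∃ p ∈ V, ∃ q ∈ V, p ≠ q ∧ ‖p - q‖ = 1)
    (M : EuclideanSpace ℝ (Fin d) → ℝ)
    (hM : ∀ x ∈ cone d α', 0 < M x ∧ ∀ y ∈ cone d α', ∀ y' ∈ cone d α',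
      M x ≤ ‖y - x‖ → M x ≤ ‖y' - x‖ →
      InnerProductGeometry.angle (y - x) (y' - x) ≤ 2 ^ 10 * α') :
    ∀ x ∈ cone d α', ∀ r : ℝ, 2 * M x < r →
      ∀ O : EuclideanSpace ℝ (Fin d) ≃ₗᵢ[ℝ] EuclideanSpace ℝ (Fin d),
        (∃ v ∈ V, x + r • O v = x) → ¬ (∀ v ∈ V, x + r • O v ∈ cone d α') := by
  intro x hx r hr O ⟨v₀, hv₀V, hv₀⟩ hall
  obtain ⟨hMpos, hMangle⟩ := hM x hx
  have hr0 : 0 < r := lt_trans (by linarith) hr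
  -- v₀ = 0
  have hv0 : v₀ = 0 := by
    have h1 : r • O v₀ = 0 := by
      have := hv₀
      rwa [add_eq_left] at this
    have h2 : O v₀ = 0 := by
      rcases smul_eq_zero.mp h1 with h | h
      · exact absurd h (ne_of_gt hr0)
      · exact h
    exact O.injective (by simpa using h2)
  -- get two distinct nonzero points q, s in V
  obtain ⟨p, hp, q, hq, s, hs, hpq, hps, hqs, _⟩ := hangle_eq
  obtain ⟨a, ha, b, hb, hab, ha0, hb0⟩ :
      ∃ a ∈ V, ∃ b ∈ V, a ≠ b ∧ a ≠ (0 : EuclideanSpace ℝ (Fin d)) ∧ b ≠ 0 := by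
    by_cases hp0 : p = 0
    · exact ⟨q, hq, s, hs, hqs, fun h => hpq (hp0.trans h.symm),
        fun h => hps (hp0.trans h.symm)⟩
    · by_cases hq0 : q = 0
      · exact ⟨p, hp, s, hs, hps, hp0, fun h => hqs (hq0.trans h.symm)⟩
      · exact ⟨p, hp, q, hq, hpq, hp0, hq0⟩
  have h0V : (0 : EuclideanSpace ℝ (Fin d)) ∈ V := hv0 ▸ hv₀V
  -- angle at 0 between a and b is ≥ α
  have hαab : α ≤ InnerProductGeometry.angle a b := by
    have := hangle 0 h0V a ha b hb (Ne.symm ha0) (Ne.symm hb0) hab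
    simpa using this
  -- the images are in the cone and far from x
  have hya := hall a ha
  have hyb := hall b hb
  have hnorm : ∀ c : EuclideanSpace ℝ (Fin d), c ∈ V → c ≠ 0 →
      M x ≤ ‖(x + r • O c) - x‖ := by
    intro c hcV hc0
    have h1 : (1:ℝ) ≤ ‖c‖ := by
      have := hside c hcV 0 h0V hc0
      simpa using this
    have : ‖(x + r • O c) - x‖ = r * ‖c‖ := by
      simp [norm_smul, abs_of_pos hr0]
    rw [this]
    nlinarith
  have hfar := hMangle _ hya _ hyb (hnorm a ha ha0) (hnorm b hb hb0)
  have hangeq : InnerProductGeometry.angle ((x + r • O a) - x) ((x + r • O b) - x)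
      = InnerProductGeometry.angle a b := by
    have h1 : (x + r • O a) - x = r • O a := by abel
    have h2 : (x + r • O b) - x = r • O b := by abel
    rw [h1, h2, InnerProductGeometry.angle_smul_smul (ne_of_gt hr0)]
    exact O.toLinearIsometry.angle_map a b
  rw [hangeq] at hfar
  -- contradiction: 2^10 * α' < α
  have hd2 : (2:ℝ) ≤ (d:ℝ) := by exact_mod_cast hd
  have : (2:ℝ)^10 * α' < α := by
    rw [hα']
    rw [mul_div_assoc', div_lt_iff₀ (by positivity)]
    nlinarith [pow_pos (by norm_num : (0:ℝ) < 2) 100, pow_pos (by norm_num : (0:ℝ) < 2) 10]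
  linarith
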